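/- Let d ≥ 0, Δ = 2^d, n ≥ 1, let k ≥ 1 be a power of two, and let a, b : {1,…,n} → {1,…,Δ}² be sequences of points such that the multiset T has at most k distinct points and a(i) ≠ b(j) for all i, j. For each j ∈ {0,…,d}, let (2^j, v_j) be a grid with cell size 2^j and arbitrary shift v_j ∈ {0,…,2^j−1}², and set Y = (1/2)·Σ_{j=0}^{d} 2^j·D_{2^j,v_j}(a,b). Then EMD(a,b) ≤ 4k²·Y. -/

import Mathlib

/-- ℓ1 norm on ℤ². -/
def l1 (p : ℤ × ℤ) : ℤ := |p.1| + |p.2|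

/-- Earth-mover distance between the multisets {a 1,…,a n} and {b 1,…,b n}:
the minimum over permutations σ of ∑ i, ‖a i − b (σ i)‖₁. -/
noncomputable def EMD {n : ℕ} (a b : Fin n → ℤ × ℤ) : ℤ :=
  Finset.univ.inf' Finset.univ_nonempty
    (fun σ : Equiv.Perm (Fin n) => ∑ i, l1 (a i - b (σ i)))

/-- The grid cell of a point p for the grid of cell size L shifted by v
(floor division; `/` on ℤ with positive divisor is floor division). -/
def cell (L : ℕ) (v p : ℤ × ℤ) : ℤ × ℤ :=
  ((p.1 - v.1) / (L : ℤ), (p.2 - v.2) / (L : ℤ))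

/-- The grid ℓ1-difference D_{L,v}(a,b) = Σ_{c∈ℤ²} |#{i : cell(a i) = c} − #{i : cell(b i) = c}|,
where the (finite) sum is taken over the cells actually occupied (all other terms vanish). -/
def D {n : ℕ} (L : ℕ) (v : ℤ × ℤ) (a b : Fin n → ℤ × ℤ) : ℤ :=
  ∑ c ∈ ((Finset.univ.image fun i => cell L v (a i)) ∪
         (Finset.univ.image fun i => cell L v (b i))),
    |((Finset.univ.filter fun i => cell L v (a i) = c).card : ℤ) -
      ((Finset.univ.filter fun i => cell L v (b i) = c).card : ℤ)|

namespace EMDLB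

open Finset

lemma l1_nonneg (p : ℤ × ℤ) : 0 ≤ l1 p := add_nonneg (abs_nonneg _) (abs_nonneg _)

/-- cost of a partial matching given by a permutation and an active set -/
def cost {n : ℕ} (a b : Fin n → ℤ × ℤ) (σ : Equiv.Perm (Fin n)) (s : Finset (Fin n)) : ℤ :=
  ∑ i ∈ s, l1 (a i - b (σ i))

lemma cost_nonneg {n : ℕ} (a b : Fin n → ℤ × ℤ) (σ : Equiv.Perm (Fin n))
    (s : Finset (Fin n)) : 0 ≤ cost a b σ s :=
  Finset.sum_nonneg fun _ _ => l1_nonneg _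

def OPTset {n : ℕ} (a b : Fin n → ℤ × ℤ) (m : ℕ) : Set ℤ :=
  {z | ∃ (σ : Equiv.Perm (Fin n)) (s : Finset (Fin n)), s.card = m ∧ z = cost a b σ s}

noncomputable def OPT {n : ℕ} (a b : Fin n → ℤ × ℤ) (m : ℕ) : ℤ :=
  sInf (OPTset a b m)

lemma OPTset_bdd {n : ℕ} (a b : Fin n → ℤ × ℤ) (m : ℕ) : BddBelow (OPTset a b m) :=
  ⟨0, by rintro z ⟨σ, s, hs, rfl⟩; exact cost_nonneg a b σ s⟩

lemma OPT_le {n : ℕ} (a b : Fin n → ℤ × ℤ) {m : ℕ} (σ : Equiv.Perm (Fin n))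
    (s : Finset (Fin n)) (hs : s.card = m) : OPT a b m ≤ cost a b σ s :=
  csInf_le (OPTset_bdd a b m) ⟨σ, s, hs, rfl⟩

lemma OPT_zero_le {n : ℕ} (a b : Fin n → ℤ × ℤ) : OPT a b 0 ≤ 0 := by
  simpa [cost] using OPT_le a b 1 (∅ : Finset (Fin n)) rfl

lemma OPT_attained {n : ℕ} (a b : Fin n → ℤ × ℤ) {m : ℕ} (hm : m ≤ n) :
    ∃ (σ : Equiv.Perm (Fin n)) (s : Finset (Fin n)), s.card = m ∧
      OPT a b m = cost a b σ s := by
  obtain ⟨s, _, hs⟩ := Finset.exists_subset_card_eq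
    (show m ≤ (Finset.univ : Finset (Fin n)).card by simpa using hm)
  have hne : (OPTset a b m).Nonempty := ⟨cost a b 1 s, 1, s, hs, rfl⟩
  have := Int.csInf_mem hne (OPTset_bdd a b m)
  obtain ⟨σ, s', hcard, hval⟩ := this
  exact ⟨σ, s', hcard, hval⟩


variable {n : ℕ}

variable {n : ℕ}

lemma walk_exists (σ τ : Equiv.Perm (Fin n)) (s t : Finset (Fin n))
    (hst : s.card < t.card) :
    ∃ (i₀ : Fin n) (L : ℕ), i₀ ∈ t ∧ i₀ ∉ s ∧ 0 < L ∧
      (∀ l, 0 < l → l < L → (fun i => σ.symm (τ i))^[l] i₀ ∈ s ∩ t) ∧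
      (fun i => σ.symm (τ i))^[L] i₀ ∉ s := by
  classical
  set g : Fin n → Fin n := fun i => σ.symm (τ i) with hgdef
  have hg : Function.Injective g := fun x y h => by
    have := σ.symm.injective h
    exact τ.injective this
  -- every start outside s eventually exits s ∩ t
  have hexit : ∀ x : Fin n, x ∉ s → ∃ l, 0 < l ∧ g^[l] x ∉ s ∩ t := by
    intro x hx
    by_contra hcon
    push_neg at hcon
    -- all iterates with positive index stay in s ∩ t
    have hall : ∀ l, 0 < l → g^[l] x ∈ s ∩ t := hcon
    have hlt : Fintype.card (Fin n) < Fintype.card (Fin (n + 1)) := by simp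
    obtain ⟨l₁, l₂, hne, heq⟩ := Fintype.exists_ne_map_eq_of_card_lt
      (fun l : Fin (n + 1) => g^[(l : ℕ) + 1] x) hlt
    wlog hlt12 : (l₁ : ℕ) < (l₂ : ℕ) generalizing l₁ l₂
    · refine this l₂ l₁ hne.symm heq.symm ?_
      have : (l₁ : ℕ) ≠ (l₂ : ℕ) := fun h => hne (Fin.val_injective h)
      omega
    · have hinj : Function.Injective (g^[(l₁ : ℕ) + 1]) := Function.Injective.iterate hg _
      have h2 : g^[(l₁ : ℕ) + 1] (g^[(l₂ : ℕ) - (l₁ : ℕ)] x) = g^[(l₁ : ℕ) + 1] x := by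
        rw [← Function.iterate_add_apply]
        have : (l₁ : ℕ) + 1 + ((l₂ : ℕ) - (l₁ : ℕ)) = (l₂ : ℕ) + 1 := by omega
        rw [this]; exact heq.symm
      have h3 : g^[(l₂ : ℕ) - (l₁ : ℕ)] x = x := hinj h2
      have h4 : g^[(l₂ : ℕ) - (l₁ : ℕ)] x ∈ s ∩ t := hall _ (by omega)
      rw [h3] at h4
      exact hx (mem_of_mem_inter_left h4)
  by_contra hcon
  push_neg at hcon
  -- for each start x ∈ t \ s, the first exit lands in s \ t ; build injection
  have hterm : ∀ x ∈ t \ s, ∃ L, 0 < L ∧ g^[L] x ∈ s \ t ∧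
      ∀ l, 0 < l → l < L → g^[l] x ∈ s ∩ t := by
    intro x hx
    rw [mem_sdiff] at hx
    obtain ⟨hxt, hxs⟩ := hx
    have hex := hexit x hxs
    have hL0 : 0 < Nat.find hex := (Nat.find_spec hex).1
    have hLnot : g^[Nat.find hex] x ∉ s ∩ t := (Nat.find_spec hex).2
    have hmin : ∀ l, 0 < l → l < Nat.find hex → g^[l] x ∈ s ∩ t := by
      intro l hl0 hlL
      by_contra hno
      have : Nat.find hex ≤ l := Nat.find_le ⟨hl0, hno⟩
      omega
    have hins : g^[Nat.find hex] x ∈ s := hcon x (Nat.find hex) hxt hxs hL0 hmin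
    exact ⟨Nat.find hex, hL0,
      mem_sdiff.2 ⟨hins, fun hmem => hLnot (mem_inter.2 ⟨hins, hmem⟩)⟩, hmin⟩
  -- choose for each start its terminal
  choose Lf hLf0 hLfmem hLfmin using hterm
  -- injectivity of the terminal map
  have hinj : ∀ x₁ (h₁ : x₁ ∈ t \ s), ∀ x₂ (h₂ : x₂ ∈ t \ s),
      g^[Lf x₁ h₁] x₁ = g^[Lf x₂ h₂] x₂ → x₁ = x₂ := by
    have key : ∀ x₁ (h₁ : x₁ ∈ t \ s), ∀ x₂ (h₂ : x₂ ∈ t \ s),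
        Lf x₁ h₁ ≤ Lf x₂ h₂ → g^[Lf x₁ h₁] x₁ = g^[Lf x₂ h₂] x₂ → x₁ = x₂ := by
      intro x₁ h₁ x₂ h₂ hle heq
      have h2 : g^[Lf x₁ h₁] (g^[Lf x₂ h₂ - Lf x₁ h₁] x₂) = g^[Lf x₁ h₁] x₁ := by
        rw [← Function.iterate_add_apply]
        have : Lf x₁ h₁ + (Lf x₂ h₂ - Lf x₁ h₁) = Lf x₂ h₂ := by omega
        rw [this]; exact heq.symm
      have h3 : g^[Lf x₂ h₂ - Lf x₁ h₁] x₂ = x₁ := (Function.Injective.iterate hg _) h2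
      rcases Nat.eq_or_lt_of_le hle with heqL | hltL
      · -- same exit time: iterate injectivity gives equality
        have : g^[Lf x₂ h₂ - Lf x₁ h₁] x₂ = x₂ := by
          rw [show Lf x₂ h₂ - Lf x₁ h₁ = 0 by omega]; rfl
        rw [this] at h3; exact h3.symm
      · have hpos := hLf0 x₁ h₁
        have hmem : g^[Lf x₂ h₂ - Lf x₁ h₁] x₂ ∈ s ∩ t :=
          hLfmin x₂ h₂ _ (by omega) (by omega)
        rw [h3] at hmem
        rw [mem_sdiff] at h₁
        exact absurd (mem_of_mem_inter_left hmem) h₁.2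
    intro x₁ h₁ x₂ h₂ heq
    rcases le_total (Lf x₁ h₁) (Lf x₂ h₂) with h | h
    · exact key x₁ h₁ x₂ h₂ h heq
    · exact (key x₂ h₂ x₁ h₁ h heq.symm).symm
  -- cardinality contradiction
  have hcard : (t \ s).card ≤ (s \ t).card := by
    apply Finset.card_le_card_of_injOn (fun x => if h : x ∈ t \ s then g^[Lf x h] x else x)
    · intro x hx
      simp only [Finset.mem_coe] at hx
      simp only [dif_pos hx]
      exact hLfmem x hx
    · intro x₁ h₁ x₂ h₂ heq
      simp only [Finset.mem_coe] at h₁ h₂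
      simp only [dif_pos h₁, dif_pos h₂] at heq
      exact hinj x₁ h₁ x₂ h₂ heq
  have e1 : (t \ s).card + (t ∩ s).card = t.card := Finset.card_sdiff_add_card_inter t s
  have e2 : (s \ t).card + (s ∩ t).card = s.card := Finset.card_sdiff_add_card_inter s t
  rw [Finset.inter_comm] at e1
  omega


/-- An augmenting chain for the partial matching (σ, s). -/
structure Chain (a b : Fin n → ℤ × ℤ) (σ : Equiv.Perm (Fin n)) (s : Finset (Fin n))
    (C : ℤ) where
  r : ℕ
  I : ℕ → Fin n
  B : ℕ → Fin n
  inj : ∀ l₁, l₁ ≤ r → ∀ l₂, l₂ ≤ r → I l₁ = I l₂ → l₁ = l₂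
  head_notin : I 0 ∉ s
  tail_in : ∀ l, 0 < l → l ≤ r → I l ∈ s
  link : ∀ l, l < r → σ (I (l + 1)) = B l
  last_fresh : σ.symm (B r) ∉ s
  costs : ∀ l, l ≤ r → l1 (a (I l) - b (B l)) ≤ C

lemma chain_cut {a b : Fin n → ℤ × ℤ} {σ : Equiv.Perm (Fin n)} {s : Finset (Fin n)}
    {C : ℤ} (ch : Chain a b σ s C) (l₁ l₂ : ℕ) (h12 : l₁ < l₂) (hl₂ : l₂ ≤ ch.r)
    (hbeq : b (ch.B l₁) = b (ch.B l₂)) :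
    ∃ ch' : Chain a b σ s C, ch'.r < ch.r := by
  classical
  set δ := l₂ - l₁ with hδ
  have hδ1 : 1 ≤ δ := by omega
  set r' := ch.r - δ with hr'
  have hr'lt : r' < ch.r := by omega
  have hr'ge : l₁ ≤ r' := by omega
  refine ⟨⟨r',
    (fun l => if l ≤ l₁ then ch.I l else ch.I (l + δ)),
    (fun l => if l < l₁ then ch.B l else if l = l₁ then ch.B l₂ else ch.B (l + δ)),
    ?_, ?_, ?_, ?_, ?_, ?_⟩, hr'lt⟩
  · -- inj
    intro u hu w hw heq
    by_cases hu1 : u ≤ l₁ <;> by_cases hw1 : w ≤ l₁ <;>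
      simp only [hu1, hw1, if_pos, if_neg, if_true, if_false] at heq
    · exact ch.inj u (by omega) w (by omega) heq
    · have := ch.inj u (by omega) (w + δ) (by omega) heq; omega
    · have := ch.inj (u + δ) (by omega) w (by omega) heq; omega
    · have := ch.inj (u + δ) (by omega) (w + δ) (by omega) heq; omega
  · -- head_notin
    simpa using ch.head_notin
  · -- tail_in
    intro l hl0 hlr
    by_cases hl1 : l ≤ l₁ <;> simp only [hl1, if_true, if_false]
    · exact ch.tail_in l hl0 (by omega)
    · exact ch.tail_in (l + δ) (by omega) (by omega)
  · -- link
    intro l hl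
    by_cases hc1 : l + 1 ≤ l₁
    · have h1 : l ≤ l₁ := by omega
      have h2 : l < l₁ := by omega
      simp only [hc1, if_true, h2, if_pos]
      exact ch.link l (by omega)
    · by_cases hc2 : l = l₁
      · subst hc2
        have h3 : ¬ (l + 1 ≤ l) := by omega
        simp only [h3, if_false, lt_irrefl, if_true, if_neg, if_pos rfl]
        have : l + 1 + δ = l₂ + 1 := by omega
        rw [this]
        exact ch.link l₂ (by omega)
      · have h4 : ¬ (l + 1 ≤ l₁) := hc1
        have h5 : ¬ (l < l₁) := by omega
        simp only [h4, if_false, h5, hc2]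
        have : l + 1 + δ = (l + δ) + 1 := by omega
        rw [this]
        exact ch.link (l + δ) (by omega)
  · -- last_fresh
    convert ch.last_fresh using 2
    split_ifs with hA hB
    · exact absurd hA (by omega)
    · have h7 : l₂ = ch.r := by omega
      rw [h7]
    · have h7 : r' + δ = ch.r := by omega
      rw [h7]
  · -- costs
    intro l hl
    rcases lt_trichotomy l l₁ with h | h | h
    · simp only [h, if_pos, le_of_lt h, if_true]
      exact ch.costs l (by omega)
    · subst h
      simp only [le_refl, if_true, lt_irrefl, if_false, if_pos rfl]
      rw [← hbeq]
      exact ch.costs l (by omega)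
    · have h8 : ¬ (l ≤ l₁) := by omega
      have h9 : ¬ (l < l₁) := by omega
      have h10 : ¬ (l = l₁) := by omega
      simp only [h8, h9, h10, if_false]
      exact ch.costs (l + δ) (by omega)

lemma chain_shorten {a b : Fin n → ℤ × ℤ} {σ : Equiv.Perm (Fin n)} {s : Finset (Fin n)}
    {C : ℤ} {k : ℕ} (hk : (Finset.univ.image b).card ≤ k)
    (ch : Chain a b σ s C) : ∃ ch' : Chain a b σ s C, ch'.r + 1 ≤ k := by
  classical
  obtain ⟨N, hN⟩ : ∃ N, ch.r ≤ N := ⟨ch.r, le_rfl⟩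
  induction N generalizing ch with
  | zero =>
    refine ⟨ch, ?_⟩
    have h1 : (Finset.univ.image b).Nonempty :=
      ⟨b (ch.I 0), Finset.mem_image_of_mem b (mem_univ _)⟩
    have := Finset.card_pos.2 h1
    omega
  | succ N ih =>
    by_cases hle : ch.r + 1 ≤ k
    · exact ⟨ch, hle⟩
    · push_neg at hle
      have hmap : ∀ l ∈ Finset.range (ch.r + 1), b (ch.B l) ∈ Finset.univ.image b :=
        fun l _ => Finset.mem_image_of_mem b (mem_univ _)
      have hcard : (Finset.univ.image b).card < (Finset.range (ch.r + 1)).card := by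
        rw [Finset.card_range]; omega
      obtain ⟨u, hu, w, hw, hne, hbeq⟩ :=
        Finset.exists_ne_map_eq_of_card_lt_of_maps_to hcard hmap
      rw [Finset.mem_range] at hu hw
      have key : ∀ l₁ l₂, l₁ < l₂ → l₂ ≤ ch.r → b (ch.B l₁) = b (ch.B l₂) →
          ∃ ch' : Chain a b σ s C, ch'.r + 1 ≤ k := by
        intro l₁ l₂ h12 hl₂ hbe
        obtain ⟨ch', hch'⟩ := chain_cut ch l₁ l₂ h12 hl₂ hbe
        exact ih ch' (by omega)
      rcases hne.lt_or_gt with hlt | hlt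
      · exact key u w hlt (by omega) hbeq
      · exact key w u hlt (by omega) hbeq.symm


/-- From a chain, produce an improved matching: one more matched element,
extra cost at most k·C. -/
lemma chain_augment {a b : Fin n → ℤ × ℤ} {σ : Equiv.Perm (Fin n)} {s : Finset (Fin n)}
    {C : ℤ} (hC : 0 ≤ C) (ch : Chain a b σ s C) {k : ℕ} (hrk : ch.r + 1 ≤ k) :
    ∃ (σ' : Equiv.Perm (Fin n)) (s' : Finset (Fin n)), s'.card = s.card + 1 ∧
      cost a b σ' s' ≤ cost a b σ s + (k : ℤ) * C := by
  classical
  set r := ch.r with hr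
  set I := ch.I with hI
  set B := ch.B with hB
  set z := σ.symm (B r) with hz
  set Jmain : List (Fin n) := (List.range (r + 1)).map I with hJmain
  have hJmainlen : Jmain.length = r + 1 := by simp [hJmain]
  have hJmainget : ∀ (l : ℕ) (h : l < Jmain.length), Jmain[l] = I l := by
    intro l h
    simp [hJmain]
  have hJmainmem : ∀ x, x ∈ Jmain ↔ ∃ l, l ≤ r ∧ I l = x := by
    intro x
    simp only [hJmain, List.mem_map, List.mem_range]
    constructor
    · rintro ⟨l, hl, rfl⟩; exact ⟨l, by omega, rfl⟩
    · rintro ⟨l, hl, rfl⟩; exact ⟨l, by omega, rfl⟩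
  have hJmainnodup : Jmain.Nodup := by
    refine List.Nodup.map_on ?_ List.nodup_range
    intro x hx y hy hxy
    rw [List.mem_range] at hx hy
    exact ch.inj x (by omega) y (by omega) hxy
  have hznots : z ∉ s := ch.last_fresh
  have hznotmain : z = I 0 ∨ z ∉ Jmain := by
    by_cases hz0 : z = I 0
    · exact Or.inl hz0
    · refine Or.inr fun hmem => ?_
      obtain ⟨l, hl, hIl⟩ := (hJmainmem z).1 hmem
      rcases Nat.eq_zero_or_pos l with h0 | hpos
      · exact hz0 (by rw [← hIl, h0])
      · exact hznots (hIl ▸ ch.tail_in l hpos hl)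
  obtain ⟨J, hJmem, hcI, hcIr⟩ :
      ∃ J : List (Fin n), (∀ x, x ∈ J ↔ (x ∈ Jmain ∨ x = z)) ∧
        (∀ l, l < r → J.formPerm (I l) = I (l + 1)) ∧
        J.formPerm (I r) = z := by
    by_cases hz0 : z = I 0
    · refine ⟨Jmain, ?_, ?_, ?_⟩
      · intro x
        constructor
        · exact fun h => Or.inl h
        · rintro (h | h)
          · exact h
          · rw [h, hz0]
            exact (hJmainmem _).2 ⟨0, by omega, rfl⟩
      · intro l hl
        have h1 : l < Jmain.length := by omega
        rw [← hJmainget l h1, List.formPerm_apply_getElem _ hJmainnodup l h1]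
        have h2 : (l + 1) % Jmain.length = l + 1 := Nat.mod_eq_of_lt (by omega)
        simp_rw [h2]
        exact hJmainget _ (by omega)
      · have h1 : r < Jmain.length := by omega
        rw [← hJmainget r h1, List.formPerm_apply_getElem _ hJmainnodup r h1]
        have h2 : (r + 1) % Jmain.length = 0 := by rw [hJmainlen]; simp
        simp_rw [h2]
        rw [hJmainget 0 (by omega), hz0]
    · have hzm : z ∉ Jmain := hznotmain.resolve_left hz0
      have hnodup : (Jmain ++ [z]).Nodup := by
        rw [List.nodup_append]
        exact ⟨hJmainnodup, List.nodup_singleton _, by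
          intro x hx y hy
          rw [List.mem_singleton] at hy
          subst hy
          rintro rfl
          exact hzm hx⟩
      have hlen : (Jmain ++ [z]).length = r + 2 := by
        rw [List.length_append, hJmainlen]; simp
      have hgetlow : ∀ (l : ℕ) (h : l < r + 1), ∃ (h' : l < (Jmain ++ [z]).length),
          (Jmain ++ [z])[l] = I l := by
        intro l h
        refine ⟨by omega, ?_⟩
        rw [List.getElem_append_left (by omega)]
        exact hJmainget l (by omega)
      refine ⟨Jmain ++ [z], ?_, ?_, ?_⟩
      · intro x
        rw [List.mem_append, List.mem_singleton]
      · intro l hl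
        obtain ⟨h1, hg1⟩ := hgetlow l (by omega)
        obtain ⟨h2, hg2⟩ := hgetlow (l + 1) (by omega)
        rw [← hg1, List.formPerm_apply_getElem _ hnodup l h1]
        have h3 : (l + 1) % (Jmain ++ [z]).length = l + 1 :=
          Nat.mod_eq_of_lt (by omega)
        simp_rw [h3]
        exact hg2
      · obtain ⟨h1, hg1⟩ := hgetlow r (by omega)
        rw [← hg1, List.formPerm_apply_getElem _ hnodup r h1]
        have h3 : (r + 1) % (Jmain ++ [z]).length = r + 1 :=
          Nat.mod_eq_of_lt (by omega)
        simp_rw [h3]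
        rw [List.getElem_append_right (by omega)]
        simp [hJmainlen]
  set c := J.formPerm with hc
  have hcfix : ∀ x, x ∉ J → c x = x := fun x hx => List.formPerm_apply_of_notMem hx
  set σ' := c.trans σ with hσ'
  have hσ'I : ∀ l, l ≤ r → σ' (I l) = B l := by
    intro l hl
    rcases eq_or_lt_of_le hl with hEq | hlt
    · show σ (c (I l)) = B l
      rw [hEq, hcIr, hz]
      simp
    · show σ (c (I l)) = B l
      rw [hcI l hlt]
      exact ch.link l hlt
  set s' := insert (I 0) s with hs'
  set chainSet : Finset (Fin n) := (Finset.range (r + 1)).image I with hcs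
  have hchainmem : ∀ x, x ∈ chainSet ↔ ∃ l, l ≤ r ∧ I l = x := by
    intro x
    simp only [hcs, Finset.mem_image, Finset.mem_range]
    constructor
    · rintro ⟨l, hl, rfl⟩; exact ⟨l, by omega, rfl⟩
    · rintro ⟨l, hl, rfl⟩; exact ⟨l, by omega, rfl⟩
  have hchainsub : chainSet ⊆ s' := by
    intro x hx
    obtain ⟨l, hl, rfl⟩ := (hchainmem x).1 hx
    rcases Nat.eq_zero_or_pos l with h0 | hpos
    · subst h0; exact Finset.mem_insert_self _ _
    · exact Finset.mem_insert_of_mem (ch.tail_in l hpos hl)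
  refine ⟨σ', s', ?_, ?_⟩
  · rw [hs', Finset.card_insert_of_notMem ch.head_notin]
  · have hsplit : chainSet ∪ (s' \ chainSet) = s' := Finset.union_sdiff_of_subset hchainsub
    have hdisj : Disjoint chainSet (s' \ chainSet) := Finset.disjoint_sdiff
    have hcost := Finset.sum_union (f := fun i => l1 (a i - b (σ' i))) hdisj
    rw [hsplit] at hcost
    rw [cost, hcost]
    have hbound1 : (∑ i ∈ chainSet, l1 (a i - b (σ' i))) ≤ (k : ℤ) * C := by
      rw [hcs, Finset.sum_image (fun x hx y hy hxy => by
        rw [Finset.mem_coe, Finset.mem_range] at hx hy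
        exact ch.inj x (by omega) y (by omega) hxy)]
      have hterms : ∀ l ∈ Finset.range (r + 1), l1 (a (I l) - b (σ' (I l))) ≤ C := by
        intro l hl
        rw [Finset.mem_range] at hl
        rw [hσ'I l (by omega)]
        exact ch.costs l (by omega)
      calc ∑ l ∈ Finset.range (r + 1), l1 (a (I l) - b (σ' (I l)))
          ≤ ∑ _l ∈ Finset.range (r + 1), C := Finset.sum_le_sum hterms
        _ = ((r : ℤ) + 1) * C := by
            rw [Finset.sum_const, Finset.card_range, nsmul_eq_mul]
            push_cast; ring
        _ ≤ (k : ℤ) * C := by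
            apply mul_le_mul_of_nonneg_right _ hC
            exact_mod_cast hrk
    have hbound2 : (∑ i ∈ s' \ chainSet, l1 (a i - b (σ' i))) ≤ cost a b σ s := by
      have hsub2 : s' \ chainSet ⊆ s := by
        intro x hx
        rw [Finset.mem_sdiff] at hx
        obtain ⟨hx1, hx2⟩ := hx
        rw [hs', Finset.mem_insert] at hx1
        rcases hx1 with h0 | hs0
        · exact absurd ((hchainmem x).2 ⟨0, by omega, h0.symm⟩) hx2
        · exact hs0
      have heqterm : ∀ x ∈ s' \ chainSet, l1 (a x - b (σ' x)) = l1 (a x - b (σ x)) := by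
        intro x hx
        have hxs : x ∈ s := hsub2 hx
        rw [Finset.mem_sdiff] at hx
        have hxnotJ : x ∉ J := by
          intro hmem
          rcases (hJmem x).1 hmem with h' | h'
          · obtain ⟨l, hl, rfl⟩ := (hJmainmem x).1 h'
            exact hx.2 ((hchainmem _).2 ⟨l, hl, rfl⟩)
          · rw [h'] at hxs
            exact hznots hxs
        show l1 (a x - b (σ (c x))) = l1 (a x - b (σ x))
        rw [hcfix x hxnotJ]
      rw [Finset.sum_congr rfl heqterm]
      exact Finset.sum_le_sum_of_subset_of_nonneg hsub2 (fun i _ _ => l1_nonneg _)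
    linarith [hbound1, hbound2]

lemma increment (a b : Fin n → ℤ × ℤ) {k : ℕ} (hb : (Finset.univ.image b).card ≤ k)
    (σ : Equiv.Perm (Fin n)) (s : Finset (Fin n)) (τ : Equiv.Perm (Fin n))
    (t : Finset (Fin n)) {C : ℤ} (hC : 0 ≤ C) (hst : s.card < t.card)
    (ht : ∀ i ∈ t, l1 (a i - b (τ i)) ≤ C) :
    ∃ (σ' : Equiv.Perm (Fin n)) (s' : Finset (Fin n)), s'.card = s.card + 1 ∧
      cost a b σ' s' ≤ cost a b σ s + (k : ℤ) * C := by
  classical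
  obtain ⟨i₀, L, hi₀t, hi₀s, hL0, hmid, hlast⟩ := walk_exists σ τ s t hst
  set g : Fin n → Fin n := fun i => σ.symm (τ i) with hg
  have hginj : Function.Injective g := fun x y h => τ.injective (σ.symm.injective h)
  have hIt : ∀ l, l ≤ L - 1 → g^[l] i₀ ∈ t := by
    intro l hl
    rcases Nat.eq_zero_or_pos l with h0 | hpos
    · subst h0; exact hi₀t
    · exact Finset.mem_of_mem_inter_right (hmid l hpos (by omega))
  have hinj : ∀ l₁, l₁ ≤ L - 1 → ∀ l₂, l₂ ≤ L - 1 → g^[l₁] i₀ = g^[l₂] i₀ → l₁ = l₂ := by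
    have key : ∀ l₁ l₂, l₁ ≤ l₂ → l₂ ≤ L - 1 → g^[l₁] i₀ = g^[l₂] i₀ → l₁ = l₂ := by
      intro l₁ l₂ h12 h2 heq
      by_contra hne
      have h3 : g^[l₁] (g^[l₂ - l₁] i₀) = g^[l₁] i₀ := by
        rw [← Function.iterate_add_apply, show l₁ + (l₂ - l₁) = l₂ by omega]
        exact heq.symm
      have h4 : g^[l₂ - l₁] i₀ = i₀ := (Function.Injective.iterate hginj l₁) h3
      have h5 : g^[l₂ - l₁] i₀ ∈ s ∩ t := hmid _ (by omega) (by omega)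
      rw [h4] at h5
      exact hi₀s (Finset.mem_of_mem_inter_left h5)
    intro l₁ h1 l₂ h2 heq
    rcases le_total l₁ l₂ with h | h
    · exact key l₁ l₂ h h2 heq
    · exact (key l₂ l₁ h h1 heq.symm).symm
  have hch : Chain a b σ s C :=
    { r := L - 1
      I := fun l => g^[l] i₀
      B := fun l => τ (g^[l] i₀)
      inj := hinj
      head_notin := by simpa using hi₀s
      tail_in := fun l hl0 hlr =>
        Finset.mem_of_mem_inter_left (hmid l hl0 (by omega))
      link := by
        intro l hl
        show σ (g^[l + 1] i₀) = τ (g^[l] i₀)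
        rw [Function.iterate_succ_apply' g l i₀]
        show σ (σ.symm (τ (g^[l] i₀))) = _
        simp
      last_fresh := by
        show σ.symm (τ (g^[L - 1] i₀)) ∉ s
        have heq : σ.symm (τ (g^[L - 1] i₀)) = g^[L] i₀ := by
          conv_rhs => rw [show L = (L - 1) + 1 by omega,
            Function.iterate_succ_apply' g (L - 1) i₀]
        rw [heq]
        exact hlast
      costs := fun l hl => ht _ (hIt l hl) }
  obtain ⟨ch', hch'k⟩ := chain_shorten hb hch
  exact chain_augment hC ch' hch'k

lemma OPT_climb (a b : Fin n → ℤ × ℤ) {k : ℕ} (hb : (Finset.univ.image b).card ≤ k)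
    (τ : Equiv.Perm (Fin n)) (t : Finset (Fin n)) {C : ℤ} (hC : 0 ≤ C)
    (ht : ∀ i ∈ t, l1 (a i - b (τ i)) ≤ C) (m p : ℕ) (hmp : m + p ≤ t.card) :
    OPT a b (m + p) ≤ OPT a b m + (p : ℤ) * ((k : ℤ) * C) := by
  induction p with
  | zero => simp
  | succ p ih =>
    have h1 : m + p ≤ t.card := by omega
    have h2 : t.card ≤ n := le_trans (Finset.card_le_univ t) (by simp)
    obtain ⟨σ, s, hcard, hOPT⟩ := OPT_attained a b (show m + p ≤ n by omega)
    obtain ⟨σ', s', hcard', hcost'⟩ := increment a b hb σ s τ t hC (by omega) ht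
    have hOPTle : OPT a b (m + p + 1) ≤ cost a b σ' s' :=
      OPT_le a b σ' s' (by omega)
    have := ih h1
    have hfin : OPT a b (m + (p + 1)) ≤ OPT a b m + ((p : ℤ) + 1) * ((k : ℤ) * C) := by
      have e1 : m + (p + 1) = m + p + 1 := by omega
      rw [e1]
      calc OPT a b (m + p + 1) ≤ cost a b σ' s' := hOPTle
        _ ≤ cost a b σ s + (k : ℤ) * C := hcost'
        _ = OPT a b (m + p) + (k : ℤ) * C := by rw [hOPT]
        _ ≤ OPT a b m + (p : ℤ) * ((k : ℤ) * C) + (k : ℤ) * C := by linarith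
        _ = OPT a b m + ((p : ℤ) + 1) * ((k : ℤ) * C) := by ring
    simpa using hfin

lemma abs_sub_le_of_ediv_eq {L x y : ℤ} (hL : 0 < L) (h : x / L = y / L) :
    |x - y| ≤ L - 1 := by
  have hx := Int.emod_add_mul_ediv x L
  have hy := Int.emod_add_mul_ediv y L
  have hx0 : 0 ≤ x % L := Int.emod_nonneg x (by omega)
  have hx1 : x % L < L := Int.emod_lt_of_pos x hL
  have hy0 : 0 ≤ y % L := Int.emod_nonneg y (by omega)
  have hy1 : y % L < L := Int.emod_lt_of_pos y hL
  have hq : L * (x / L) = L * (y / L) := by rw [h]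
  rw [abs_le]
  constructor <;> linarith

lemma l1_le_of_cell_eq {L : ℕ} (hL : 1 ≤ L) {v p q : ℤ × ℤ}
    (h : cell L v p = cell L v q) : l1 (p - q) ≤ 2 * (L : ℤ) - 2 := by
  have hLpos : (0 : ℤ) < (L : ℤ) := by exact_mod_cast hL
  have h1 : (p.1 - v.1) / (L : ℤ) = (q.1 - v.1) / (L : ℤ) := congrArg Prod.fst h
  have h2 : (p.2 - v.2) / (L : ℤ) = (q.2 - v.2) / (L : ℤ) := congrArg Prod.snd h
  have hb1 : |(p.1 - v.1) - (q.1 - v.1)| ≤ (L : ℤ) - 1 := abs_sub_le_of_ediv_eq hLpos h1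
  have hb2 : |(p.2 - v.2) - (q.2 - v.2)| ≤ (L : ℤ) - 1 := abs_sub_le_of_ediv_eq hLpos h2
  have e1 : (p.1 - v.1) - (q.1 - v.1) = p.1 - q.1 := by ring
  have e2 : (p.2 - v.2) - (q.2 - v.2) = p.2 - q.2 := by ring
  rw [e1] at hb1
  rw [e2] at hb2
  have : l1 (p - q) = |p.1 - q.1| + |p.2 - q.2| := rfl
  rw [this]
  linarith

/-- Sum of the positive parts of per-cell differences; equals D/2. -/
def SM {n : ℕ} (L : ℕ) (v : ℤ × ℤ) (a b : Fin n → ℤ × ℤ) : ℤ :=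
  ∑ c ∈ ((Finset.univ.image fun i => cell L v (a i)) ∪
         (Finset.univ.image fun i => cell L v (b i))),
    max (((Finset.univ.filter fun i => cell L v (a i) = c).card : ℤ) -
      ((Finset.univ.filter fun i => cell L v (b i) = c).card : ℤ)) 0

lemma SM_nonneg (L : ℕ) (v : ℤ × ℤ) (a b : Fin n → ℤ × ℤ) : 0 ≤ SM L v a b :=
  Finset.sum_nonneg fun c _ => le_max_right _ _

lemma D_nonneg (L : ℕ) (v : ℤ × ℤ) (a b : Fin n → ℤ × ℤ) : 0 ≤ D L v a b :=
  Finset.sum_nonneg fun c _ => abs_nonneg _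

lemma sum_na (L : ℕ) (v : ℤ × ℤ) (a b : Fin n → ℤ × ℤ) :
    ∑ c ∈ ((Finset.univ.image fun i => cell L v (a i)) ∪
           (Finset.univ.image fun i => cell L v (b i))),
      ((Finset.univ.filter fun i => cell L v (a i) = c).card : ℤ) = (n : ℤ) := by
  have h := Finset.card_eq_sum_card_fiberwise
    (f := fun i => cell L v (a i)) (s := (Finset.univ : Finset (Fin n)))
    (t := ((Finset.univ.image fun i => cell L v (a i)) ∪
           (Finset.univ.image fun i => cell L v (b i))))
    (fun i _ => Finset.mem_union_left _ (Finset.mem_image_of_mem _ (Finset.mem_univ i)))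
  have h2 : (Finset.univ : Finset (Fin n)).card = n := by simp
  rw [h2] at h
  exact_mod_cast h.symm

lemma sum_nb (L : ℕ) (v : ℤ × ℤ) (a b : Fin n → ℤ × ℤ) :
    ∑ c ∈ ((Finset.univ.image fun i => cell L v (a i)) ∪
           (Finset.univ.image fun i => cell L v (b i))),
      ((Finset.univ.filter fun i => cell L v (b i) = c).card : ℤ) = (n : ℤ) := by
  have h := Finset.card_eq_sum_card_fiberwise
    (f := fun i => cell L v (b i)) (s := (Finset.univ : Finset (Fin n)))
    (t := ((Finset.univ.image fun i => cell L v (a i)) ∪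
           (Finset.univ.image fun i => cell L v (b i))))
    (fun i _ => Finset.mem_union_right _ (Finset.mem_image_of_mem _ (Finset.mem_univ i)))
  have h2 : (Finset.univ : Finset (Fin n)).card = n := by simp
  rw [h2] at h
  exact_mod_cast h.symm

lemma D_eq_two_SM (L : ℕ) (v : ℤ × ℤ) (a b : Fin n → ℤ × ℤ) :
    D L v a b = 2 * SM L v a b := by
  have habs : ∀ x : ℤ, |x| = 2 * max x 0 - x := by
    intro x
    rcases le_or_gt 0 x with h | h
    · rw [abs_of_nonneg h, max_eq_left h]; ring
    · rw [abs_of_neg h, max_eq_right (le_of_lt h)]; ring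
  rw [D, Finset.sum_congr rfl (fun c _ => habs _)]
  rw [Finset.sum_sub_distrib, Finset.sum_sub_distrib]
  rw [sum_na, sum_nb, SM, Finset.mul_sum]
  ring

lemma witness_exists (a b : Fin n → ℤ × ℤ) (L : ℕ) (v : ℤ × ℤ) :
    ∃ (τ : Equiv.Perm (Fin n)) (t : Finset (Fin n)),
      (∀ i ∈ t, cell L v (a i) = cell L v (b (τ i))) ∧
      (n : ℤ) - SM L v a b ≤ (t.card : ℤ) := by
  classical
  set U := ((Finset.univ.image fun i => cell L v (a i)) ∪
            (Finset.univ.image fun i => cell L v (b i))) with hU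
  set na : ℤ × ℤ → ℕ := fun c => (Finset.univ.filter fun i => cell L v (a i) = c).card
    with hna
  set nb : ℤ × ℤ → ℕ := fun c => (Finset.univ.filter fun i => cell L v (b i) = c).card
    with hnb
  set P : Finset (Fin n) → Prop :=
    fun t => ∃ τ : Equiv.Perm (Fin n), ∀ i ∈ t, cell L v (a i) = cell L v (b (τ i))
    with hP
  have hPempty : P ∅ := ⟨1, by simp⟩
  have hne : (Finset.univ.filter P).Nonempty :=
    ⟨∅, Finset.mem_filter.2 ⟨Finset.mem_univ _, hPempty⟩⟩
  obtain ⟨t, htmem, htmax⟩ := Finset.exists_max_image (Finset.univ.filter P)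
    (fun t => t.card) hne
  obtain ⟨τ, hτ⟩ := (Finset.mem_filter.1 htmem).2
  refine ⟨τ, t, hτ, ?_⟩
  by_contra hcon
  push_neg at hcon
  -- counting: some cell has an unused a-point and an unused b-point
  have hfib : ∀ i ∈ t, cell L v (a i) ∈ U :=
    fun i _ => Finset.mem_union_left _ (Finset.mem_image_of_mem _ (Finset.mem_univ i))
  have htcard : (t.card : ℤ) =
      ∑ c ∈ U, ((t.filter fun i => cell L v (a i) = c).card : ℤ) := by
    exact_mod_cast congrArg (fun m : ℕ => (m : ℤ))
      (Finset.card_eq_sum_card_fiberwise hfib)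
  have hnsum : ∑ c ∈ U, ((na c : ℤ)) = (n : ℤ) := sum_na L v a b
  have hSM : SM L v a b = ∑ c ∈ U, max ((na c : ℤ) - nb c) 0 := rfl
  have hsumlt : ∑ c ∈ U, (((t.filter fun i => cell L v (a i) = c).card : ℤ) +
      max ((na c : ℤ) - nb c) 0) < ∑ c ∈ U, (na c : ℤ) := by
    rw [Finset.sum_add_distrib, ← htcard, ← hSM, hnsum]
    linarith
  obtain ⟨c, hcU, hclt⟩ := Finset.exists_lt_of_sum_lt hsumlt
  have hfa : ((t.filter fun i => cell L v (a i) = c).card : ℤ) < na c := by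
    have := le_max_right ((na c : ℤ) - nb c) 0
    linarith
  have hfb : ((t.filter fun i => cell L v (a i) = c).card : ℤ) < nb c := by
    have := le_max_left ((na c : ℤ) - nb c) 0
    linarith
  -- find an unused a-point in cell c
  have hsub_a : t.filter (fun i => cell L v (a i) = c) ⊆
      Finset.univ.filter (fun i => cell L v (a i) = c) :=
    Finset.filter_subset_filter _ (Finset.subset_univ t)
  obtain ⟨i, hiU, hit⟩ : ∃ i, i ∈ Finset.univ.filter (fun i => cell L v (a i) = c) ∧
      i ∉ t.filter (fun i => cell L v (a i) = c) := by
    by_contra hno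
    push_neg at hno
    have : Finset.univ.filter (fun i => cell L v (a i) = c) ⊆
        t.filter (fun i => cell L v (a i) = c) := fun x hx => hno x hx
    have hcard := Finset.card_le_card this
    have : (na c : ℤ) ≤ ((t.filter fun i => cell L v (a i) = c).card : ℤ) := by
      exact_mod_cast hcard
    linarith
  have hic : cell L v (a i) = c := (Finset.mem_filter.1 hiU).2
  have hint : i ∉ t := fun h => hit (Finset.mem_filter.2 ⟨h, hic⟩)
  -- find an unused b-point in cell c
  set bused := (t.filter (fun i => cell L v (a i) = c)).image τ with hbused
  have hbusedsub : bused ⊆ Finset.univ.filter (fun i' => cell L v (b i') = c) := by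
    intro x hx
    rw [hbused, Finset.mem_image] at hx
    obtain ⟨i'', hi'', rfl⟩ := hx
    rw [Finset.mem_filter] at hi''
    refine Finset.mem_filter.2 ⟨Finset.mem_univ _, ?_⟩
    rw [← hτ i'' hi''.1, hi''.2]
  have hbusedcard : (bused.card : ℤ) =
      ((t.filter fun i => cell L v (a i) = c).card : ℤ) := by
    exact_mod_cast congrArg (fun m : ℕ => (m : ℤ))
      (Finset.card_image_of_injective _ τ.injective)
  obtain ⟨i', hi'U, hi'used⟩ : ∃ i', i' ∈ Finset.univ.filter (fun j => cell L v (b j) = c) ∧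
      i' ∉ bused := by
    by_contra hno
    push_neg at hno
    have hsub : Finset.univ.filter (fun j => cell L v (b j) = c) ⊆ bused :=
      fun x hx => hno x hx
    have hcard := Finset.card_le_card hsub
    have : (nb c : ℤ) ≤ (bused.card : ℤ) := by exact_mod_cast hcard
    linarith
  have hi'c : cell L v (b i') = c := (Finset.mem_filter.1 hi'U).2
  -- i' is not used by τ on t at all
  have hi'nott : ∀ i'' ∈ t, τ i'' ≠ i' := by
    intro i'' hi'' heq
    have hcell : cell L v (a i'') = c := by
      rw [hτ i'' hi'', heq, hi'c]
    apply hi'used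
    rw [hbused, ← heq]
    exact Finset.mem_image_of_mem τ (Finset.mem_filter.2 ⟨hi'', hcell⟩)
  -- extend the matching
  set τ' := (Equiv.swap i (τ.symm i')).trans τ with hτ'
  have hτ'i : τ' i = i' := by
    rw [hτ']
    simp [Equiv.swap_apply_left]
  have hτ'fix : ∀ i'' ∈ t, τ' i'' = τ i'' := by
    intro i'' hi''
    have h1 : i'' ≠ i := fun h => hint (h ▸ hi'')
    have h2 : i'' ≠ τ.symm i' := by
      intro h
      have : τ i'' = i' := by rw [h]; simp
      exact hi'nott i'' hi'' this
    show τ ((Equiv.swap i (τ.symm i')) i'') = τ i''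
    rw [Equiv.swap_apply_of_ne_of_ne h1 h2]
  have hins : P (insert i t) := by
    refine ⟨τ', fun j hj => ?_⟩
    rcases Finset.mem_insert.1 hj with rfl | hjt
    · rw [hτ'i, hic, hi'c]
    · rw [hτ'fix j hjt]
      exact hτ j hjt
  have hmem' : insert i t ∈ Finset.univ.filter P :=
    Finset.mem_filter.2 ⟨Finset.mem_univ _, hins⟩
  have hle := htmax _ hmem'
  rw [Finset.card_insert_of_notMem hint] at hle
  omega

lemma two_n_le_D_one (a b : Fin n → ℤ × ℤ) (hab : ∀ i j, a i ≠ b j) :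
    2 * (n : ℤ) ≤ D 1 (0, 0) a b := by
  classical
  have hcell : ∀ p : ℤ × ℤ, cell 1 (0, 0) p = p := by
    intro p
    simp [cell]
  have hkey : ∀ c ∈ ((Finset.univ.image fun i => cell 1 ((0 : ℤ), (0 : ℤ)) (a i)) ∪
      (Finset.univ.image fun i => cell 1 ((0 : ℤ), (0 : ℤ)) (b i))),
      ((Finset.univ.filter fun i => cell 1 ((0 : ℤ), (0 : ℤ)) (a i) = c).card : ℤ) +
        ((Finset.univ.filter fun i => cell 1 ((0 : ℤ), (0 : ℤ)) (b i) = c).card : ℤ) ≤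
      |((Finset.univ.filter fun i => cell 1 ((0 : ℤ), (0 : ℤ)) (a i) = c).card : ℤ) -
        ((Finset.univ.filter fun i => cell 1 ((0 : ℤ), (0 : ℤ)) (b i) = c).card : ℤ)| := by
    intro c _
    by_cases hA : (Finset.univ.filter fun i => cell 1 ((0 : ℤ), (0 : ℤ)) (a i) = c).card = 0
    · rw [hA]
      push_cast
      rw [zero_add, zero_sub, abs_neg, abs_of_nonneg (by positivity)]
    · have hB : (Finset.univ.filter fun i => cell 1 ((0 : ℤ), (0 : ℤ)) (b i) = c).card = 0 := by
        by_contra hB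
        obtain ⟨i, hi⟩ := Finset.card_pos.1 (Nat.pos_of_ne_zero hA)
        obtain ⟨i', hi'⟩ := Finset.card_pos.1 (Nat.pos_of_ne_zero hB)
        rw [Finset.mem_filter] at hi hi'
        have h1 : a i = c := by rw [← hcell (a i)]; exact hi.2
        have h2 : b i' = c := by rw [← hcell (b i')]; exact hi'.2
        exact hab i i' (h1.trans h2.symm)
      rw [hB]
      push_cast
      rw [add_zero, sub_zero, abs_of_nonneg (by positivity)]
  calc 2 * (n : ℤ)
      = (n : ℤ) + (n : ℤ) := by ring
    _ = (∑ c ∈ ((Finset.univ.image fun i => cell 1 ((0 : ℤ), (0 : ℤ)) (a i)) ∪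
          (Finset.univ.image fun i => cell 1 ((0 : ℤ), (0 : ℤ)) (b i))),
          ((Finset.univ.filter fun i => cell 1 ((0 : ℤ), (0 : ℤ)) (a i) = c).card : ℤ)) +
        ∑ c ∈ ((Finset.univ.image fun i => cell 1 ((0 : ℤ), (0 : ℤ)) (a i)) ∪
          (Finset.univ.image fun i => cell 1 ((0 : ℤ), (0 : ℤ)) (b i))),
          ((Finset.univ.filter fun i => cell 1 ((0 : ℤ), (0 : ℤ)) (b i) = c).card : ℤ) := by
        rw [sum_na, sum_nb]
    _ = ∑ c ∈ ((Finset.univ.image fun i => cell 1 ((0 : ℤ), (0 : ℤ)) (a i)) ∪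
          (Finset.univ.image fun i => cell 1 ((0 : ℤ), (0 : ℤ)) (b i))),
          (((Finset.univ.filter fun i => cell 1 ((0 : ℤ), (0 : ℤ)) (a i) = c).card : ℤ) +
           ((Finset.univ.filter fun i => cell 1 ((0 : ℤ), (0 : ℤ)) (b i) = c).card : ℤ)) := by
        rw [Finset.sum_add_distrib]
    _ ≤ _ := Finset.sum_le_sum hkey

lemma EMD_le_OPT [NeZero n] (a b : Fin n → ℤ × ℤ) : EMD a b ≤ OPT a b n := by
  obtain ⟨σ, s, hcard, hOPT⟩ := OPT_attained a b le_rfl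
  have hs : s = Finset.univ := (Finset.card_eq_iff_eq_univ s).1 (by simpa using hcard)
  rw [hOPT, hs]
  exact Finset.inf'_le _ (Finset.mem_univ σ)

lemma sum_two_pow_succ (d : ℕ) : ∑ j ∈ Finset.range d, (2 : ℤ) ^ (j + 1) = 2 ^ (d + 1) - 2 := by
  induction d with
  | zero => simp
  | succ d ih => rw [Finset.sum_range_succ, ih]; ring

end EMDLB

open EMDLB in
/-- lower bound: with Δ = 2^d, k ≥ 1 a power of two, T with at most k
distinct points, disjoint S and T, arbitrary shifts v_j, and
Y = (1/2)·Σ_{j=0}^{d} 2^j·D_{2^j,v_j}(a,b), we have EMD(a,b) ≤ 4k²·Y. -/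
theorem emd_lower_bound (d n k : ℕ) (hn : 1 ≤ n) (hk : ∃ t : ℕ, k = 2 ^ t)
    (a b : Fin n → ℤ × ℤ)
    (ha : ∀ i, 1 ≤ (a i).1 ∧ (a i).1 ≤ 2 ^ d ∧ 1 ≤ (a i).2 ∧ (a i).2 ≤ 2 ^ d)
    (hb : ∀ i, 1 ≤ (b i).1 ∧ (b i).1 ≤ 2 ^ d ∧ 1 ≤ (b i).2 ∧ (b i).2 ≤ 2 ^ d)
    (hT : (Finset.univ.image b).card ≤ k)
    (hab : ∀ i j, a i ≠ b j)
    (v : ℕ → ℤ × ℤ)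
    (hv : ∀ j ≤ d, 0 ≤ (v j).1 ∧ (v j).1 < 2 ^ j ∧ 0 ≤ (v j).2 ∧ (v j).2 < 2 ^ j)
    (Y : ℝ)
    (hY : Y = (1 / 2 : ℝ) *
      ∑ j ∈ Finset.range (d + 1), (2 : ℝ) ^ j * (D (2 ^ j) (v j) a b : ℝ)) :
    (EMD a b : ℝ) ≤ 4 * (k : ℝ) ^ 2 * Y := by
  classical
  have : NeZero n := ⟨by omega⟩
  have hk1 : 1 ≤ k := by obtain ⟨t, rfl⟩ := hk; exact Nat.one_le_two_pow
  -- per-level witnesses from the cell structure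
  have hwit : ∀ j : ℕ, ∃ (τ : Equiv.Perm (Fin n)) (t : Finset (Fin n)),
      (∀ i ∈ t, l1 (a i - b (τ i)) ≤ 2 ^ (j + 1)) ∧
      (n : ℤ) - SM (2 ^ j) (v j) a b ≤ (t.card : ℤ) := by
    intro j
    obtain ⟨τ, t, hco, hcard⟩ := witness_exists a b (2 ^ j) (v j)
    refine ⟨τ, t, fun i hi => ?_, hcard⟩
    have h1 := l1_le_of_cell_eq (Nat.one_le_two_pow) (hco i hi)
    have h2 : (((2 : ℕ) ^ j : ℕ) : ℤ) = (2 : ℤ) ^ j := by push_cast; ring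
    have h3 : (2 : ℤ) ^ (j + 1) = 2 * 2 ^ j := by ring
    rw [h2] at h1
    linarith
  choose τw tw hwd hwc using hwit
  set τW : ℕ → Equiv.Perm (Fin n) := fun j => if j = d then 1 else τw j with hτW
  set tW : ℕ → Finset (Fin n) := fun j => if j = d then Finset.univ else tw j with htW
  have hWdist : ∀ j, ∀ i ∈ tW j, l1 (a i - b (τW j i)) ≤ 2 ^ (j + 1) := by
    intro j i hi
    by_cases hjd : j = d
    · subst hjd
      have hτ1 : τW j = 1 := by rw [hτW]; simp
      rw [hτ1]
      simp only [Equiv.Perm.one_apply]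
      obtain ⟨ha1, ha2, ha3, ha4⟩ := ha i
      obtain ⟨hb1, hb2, hb3, hb4⟩ := hb i
      have e : l1 (a i - b i) = |(a i).1 - (b i).1| + |(a i).2 - (b i).2| := rfl
      have k1 : |(a i).1 - (b i).1| ≤ 2 ^ j - 1 :=
        abs_le.mpr ⟨by linarith, by linarith⟩
      have k2 : |(a i).2 - (b i).2| ≤ 2 ^ j - 1 :=
        abs_le.mpr ⟨by linarith, by linarith⟩
      have hp : (2 : ℤ) ^ (j + 1) = 2 * 2 ^ j := by ring
      rw [e]
      linarith
    · have hτ2 : τW j = τw j := by rw [hτW]; simp [hjd]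
      have ht2 : tW j = tw j := by rw [htW]; simp [hjd]
      rw [hτ2]
      rw [ht2] at hi
      exact hwd j i hi
  have hWcard : ∀ j, (n : ℤ) - SM (2 ^ j) (v j) a b ≤ ((tW j).card : ℤ) := by
    intro j
    by_cases hjd : j = d
    · have ht2 : tW j = Finset.univ := by rw [htW]; simp [hjd]
      rw [ht2]
      have := SM_nonneg (2 ^ j) (v j) a b
      simp only [Finset.card_univ, Fintype.card_fin]
      linarith
    · have ht2 : tW j = tw j := by rw [htW]; simp [hjd]
      rw [ht2]
      exact hwc j
  have hWle : ∀ j, (tW j).card ≤ n := fun j =>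
    le_trans (Finset.card_le_univ _) (le_of_eq (Fintype.card_fin n))
  set R : ℕ → ℕ := fun j => (Finset.range (j + 1)).sup (fun j' => (tW j').card) with hR
  have hRmono : ∀ j, R j ≤ R (j + 1) := by
    intro j
    show (Finset.range (j + 1)).sup (fun j' => (tW j').card) ≤
      (Finset.range (j + 1 + 1)).sup (fun j' => (tW j').card)
    exact Finset.sup_mono (Finset.range_subset_range.2 (by omega))
  have hRW : ∀ j, (tW j).card ≤ R j := by
    intro j
    show (tW j).card ≤ (Finset.range (j + 1)).sup (fun j' => (tW j').card)
    exact Finset.le_sup (f := fun j' => (tW j').card) (Finset.self_mem_range_succ j)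
  have hRle : ∀ j, R j ≤ n := by
    intro j
    show (Finset.range (j + 1)).sup (fun j' => (tW j').card) ≤ n
    exact Finset.sup_le fun j' _ => hWle j'
  have hRd : R d = n := by
    refine le_antisymm (hRle d) ?_
    have h1 := hRW d
    have h2 : tW d = Finset.univ := by rw [htW]; simp
    rw [h2] at h1
    simpa using h1
  have hpow : ∀ j : ℕ, (0 : ℤ) ≤ 2 ^ (j + 1) := fun j => by positivity
  -- the telescoping climb over levels
  have hmain : ∀ j, OPT a b (R j) ≤
      (k : ℤ) * (2 ^ (j + 1) * (R j : ℤ) -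
        ∑ j' ∈ Finset.range j, 2 ^ (j' + 1) * (R j' : ℤ)) := by
    intro j
    induction j with
    | zero =>
      have hR0 : R 0 = (tW 0).card := by
        show (Finset.range 1).sup (fun j' => (tW j').card) = (tW 0).card
        rw [Finset.range_one, Finset.sup_singleton]
      have hclimb := OPT_climb a b hT (τW 0) (tW 0) (hpow 0) (hWdist 0) 0 (R 0)
        (by omega)
      rw [Nat.zero_add] at hclimb
      have h0 := OPT_zero_le a b
      simp only [Finset.range_zero, Finset.sum_empty, sub_zero]
      have : (2 : ℤ) ^ (0 + 1) = 2 := by norm_num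
      rw [this]
      calc OPT a b (R 0) ≤ OPT a b 0 + (R 0 : ℤ) * ((k : ℤ) * 2 ^ (0 + 1)) := hclimb
        _ ≤ (R 0 : ℤ) * ((k : ℤ) * 2 ^ (0 + 1)) := by linarith
        _ = (k : ℤ) * (2 * (R 0 : ℤ)) := by ring
    | succ j ih =>
      -- single step from R j to R (j+1)
      have hstep : OPT a b (R (j + 1)) ≤ OPT a b (R j) +
          ((R (j + 1) : ℤ) - (R j : ℤ)) * ((k : ℤ) * 2 ^ (j + 2)) := by
        rcases Nat.eq_or_lt_of_le (hRmono j) with heq | hlt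
        · rw [← heq]
          simp
        · have hcardle : R (j + 1) ≤ (tW (j + 1)).card := by
            have hsplit : R (j + 1) = max ((tW (j + 1)).card) (R j) := by
              show (Finset.range (j + 1 + 1)).sup (fun j' => (tW j').card) = _
              rw [Finset.range_add_one, Finset.sup_insert]
            rcases le_total ((tW (j + 1)).card) (R j) with h | h
            · rw [hsplit, max_eq_right h] at hlt
              omega
            · rw [hsplit, max_eq_left h]
          have hp : R j + (R (j + 1) - R j) = R (j + 1) := by omega
          have hclimb := OPT_climb a b hT (τW (j + 1)) (tW (j + 1)) (hpow (j + 1))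
            (hWdist (j + 1)) (R j) (R (j + 1) - R j) (by omega)
          rw [hp] at hclimb
          have hcast : ((R (j + 1) - R j : ℕ) : ℤ) = (R (j + 1) : ℤ) - (R j : ℤ) := by
            have := hRmono j
            push_cast [Nat.cast_sub this]
            ring
          rw [hcast] at hclimb
          exact hclimb
      have hsum := Finset.sum_range_succ (fun j' => (2 : ℤ) ^ (j' + 1) * (R j' : ℤ)) j
      have e1 : (k : ℤ) * (2 ^ (j + 1 + 1) * (R (j + 1) : ℤ) -
          ((∑ j' ∈ Finset.range j, 2 ^ (j' + 1) * (R j' : ℤ)) +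
            2 ^ (j + 1) * (R j : ℤ))) =
          (k : ℤ) * (2 ^ (j + 1) * (R j : ℤ) -
            ∑ j' ∈ Finset.range j, 2 ^ (j' + 1) * (R j' : ℤ)) +
          ((R (j + 1) : ℤ) - (R j : ℤ)) * ((k : ℤ) * 2 ^ (j + 2)) := by
        ring
      rw [hsum, e1]
      linarith
  -- put it together at level d
  have hfinal := hmain d
  rw [hRd] at hfinal
  -- lower bound each R j by n - SM_j
  have hsumR : ∑ j ∈ Finset.range d, (2 : ℤ) ^ (j + 1) * ((n : ℤ) - SM (2 ^ j) (v j) a b) ≤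
      ∑ j ∈ Finset.range d, (2 : ℤ) ^ (j + 1) * (R j : ℤ) := by
    refine Finset.sum_le_sum fun j _ => ?_
    have h1 : ((tW j).card : ℤ) ≤ (R j : ℤ) := by exact_mod_cast hRW j
    have h2 := hWcard j
    exact mul_le_mul_of_nonneg_left (by linarith) (hpow j)
  have hOPTn : OPT a b n ≤ (k : ℤ) * (2 * (n : ℤ) +
      ∑ j ∈ Finset.range d, (2 : ℤ) ^ (j + 1) * SM (2 ^ j) (v j) a b) := by
    have hexp : ∑ j ∈ Finset.range d, (2 : ℤ) ^ (j + 1) * ((n : ℤ) - SM (2 ^ j) (v j) a b) =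
        (2 ^ (d + 1) - 2) * (n : ℤ) -
          ∑ j ∈ Finset.range d, (2 : ℤ) ^ (j + 1) * SM (2 ^ j) (v j) a b := by
      simp only [mul_sub]
      rw [Finset.sum_sub_distrib, ← Finset.sum_mul, sum_two_pow_succ]
    have hk0 : (0 : ℤ) ≤ (k : ℤ) := by positivity
    calc OPT a b n ≤ (k : ℤ) * (2 ^ (d + 1) * (n : ℤ) -
          ∑ j ∈ Finset.range d, 2 ^ (j + 1) * (R j : ℤ)) := hfinal
      _ ≤ (k : ℤ) * (2 ^ (d + 1) * (n : ℤ) -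
          ∑ j ∈ Finset.range d, (2 : ℤ) ^ (j + 1) * ((n : ℤ) - SM (2 ^ j) (v j) a b)) := by
          apply mul_le_mul_of_nonneg_left _ hk0
          linarith
      _ = (k : ℤ) * (2 * (n : ℤ) +
          ∑ j ∈ Finset.range d, (2 : ℤ) ^ (j + 1) * SM (2 ^ j) (v j) a b) := by
          rw [hexp]; ring
  -- rewrite in terms of D
  have hSMD : ∀ j, (2 : ℤ) ^ (j + 1) * SM (2 ^ j) (v j) a b =
      2 ^ j * D (2 ^ j) (v j) a b := by
    intro j
    rw [D_eq_two_SM]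
    ring
  set S : ℤ := ∑ j ∈ Finset.range (d + 1), (2 : ℤ) ^ j * D (2 ^ j) (v j) a b with hS
  have hterm_nonneg : ∀ j ∈ Finset.range (d + 1),
      (0 : ℤ) ≤ (2 : ℤ) ^ j * D (2 ^ j) (v j) a b :=
    fun j _ => mul_nonneg (by positivity) (D_nonneg _ _ _ _)
  have h2nS : 2 * (n : ℤ) ≤ S := by
    have hv0 : v 0 = ((0 : ℤ), (0 : ℤ)) := by
      obtain ⟨h1, h2, h3, h4⟩ := hv 0 (Nat.zero_le d)
      have e1 : (v 0).1 = 0 := by simpa using (by omega : (v 0).1 = 0)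
      have e2 : (v 0).2 = 0 := by simpa using (by omega : (v 0).2 = 0)
      exact Prod.ext e1 e2
    have hD0 : 2 * (n : ℤ) ≤ D (2 ^ 0) (v 0) a b := by
      rw [hv0]
      have : (2 : ℕ) ^ 0 = 1 := by norm_num
      rw [this]
      exact two_n_le_D_one a b hab
    have hsingle : (2 : ℤ) ^ 0 * D (2 ^ 0) (v 0) a b ≤ S :=
      Finset.single_le_sum hterm_nonneg (Finset.mem_range.2 (by omega))
    have he : (2 : ℤ) ^ 0 * D (2 ^ 0) (v 0) a b = D (2 ^ 0) (v 0) a b := by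
      norm_num
    rw [he] at hsingle
    linarith
  have hsubS : ∑ j ∈ Finset.range d, (2 : ℤ) ^ j * D (2 ^ j) (v j) a b ≤ S := by
    apply Finset.sum_le_sum_of_subset_of_nonneg
    · exact Finset.range_subset_range.2 (by omega)
    · exact fun j hj _ => hterm_nonneg j hj
  have hOPT2 : OPT a b n ≤ 2 * (k : ℤ) * S := by
    have hrw : ∑ j ∈ Finset.range d, (2 : ℤ) ^ (j + 1) * SM (2 ^ j) (v j) a b =
        ∑ j ∈ Finset.range d, (2 : ℤ) ^ j * D (2 ^ j) (v j) a b :=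
      Finset.sum_congr rfl fun j _ => hSMD j
    rw [hrw] at hOPTn
    have hk0 : (0 : ℤ) ≤ (k : ℤ) := by positivity
    calc OPT a b n ≤ (k : ℤ) * (2 * (n : ℤ) +
          ∑ j ∈ Finset.range d, (2 : ℤ) ^ j * D (2 ^ j) (v j) a b) := hOPTn
      _ ≤ (k : ℤ) * (S + S) := by
          apply mul_le_mul_of_nonneg_left _ hk0
          linarith
      _ = 2 * (k : ℤ) * S := by ring
  have hEMD : EMD a b ≤ 2 * (k : ℤ) * S := le_trans (EMD_le_OPT a b) hOPT2
  -- move to the reals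
  have hcast : ((S : ℤ) : ℝ) =
      ∑ j ∈ Finset.range (d + 1), (2 : ℝ) ^ j * (D (2 ^ j) (v j) a b : ℝ) := by
    rw [hS]
    push_cast
    rfl
  have hSnn : (0 : ℝ) ≤ ((S : ℤ) : ℝ) := by
    have : (0 : ℤ) ≤ S := by linarith [h2nS, Int.natCast_nonneg n]
    exact_mod_cast this
  have hYS : Y = (1 / 2 : ℝ) * ((S : ℤ) : ℝ) := by rw [hY, hcast]
  have hEMDr : (EMD a b : ℝ) ≤ 2 * (k : ℝ) * ((S : ℤ) : ℝ) := by
    have := hEMD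
    calc (EMD a b : ℝ) ≤ ((2 * (k : ℤ) * S : ℤ) : ℝ) := by exact_mod_cast this
      _ = 2 * (k : ℝ) * ((S : ℤ) : ℝ) := by push_cast; ring
  rw [hYS]
  have hkk : (2 : ℝ) * (k : ℝ) ≤ 2 * (k : ℝ) ^ 2 := by
    have hk1' : (1 : ℝ) ≤ (k : ℝ) := by exact_mod_cast hk1
    nlinarith
  calc (EMD a b : ℝ) ≤ 2 * (k : ℝ) * ((S : ℤ) : ℝ) := hEMDr
    _ ≤ 2 * (k : ℝ) ^ 2 * ((S : ℤ) : ℝ) := by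
        apply mul_le_mul_of_nonneg_right hkk hSnn
    _ = 4 * (k : ℝ) ^ 2 * ((1 / 2 : ℝ) * ((S : ℤ) : ℝ)) := by ring
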